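/- Assume n ≤ m and let x, y be nonzero complex numbers. Let Ω_0 = ([n]_q/[m+1]_q) v_0 ⊗ w_0, and for 0 ≤ l ≤ n define φ_{l,0} = e_0^l Ω_0, where e_0 acts on V_m ⊗ V_n by e_0(v ⊗ w) = q^{-1} x (f v) ⊗ (K^{-1} w) + q^{-1} y v ⊗ (f w); write φ_{l,0} = ∑_{i=0}^{l} γ_{l,0}^{i,l-i} v_i ⊗ w_{l-i}. Then γ_{l,0}^{l-i,i} = x^{l-i} y^i [l]_q! q^{-l} q^{(l-i)(i-n)} · ([n]_q/[m+1]_q) for 0 ≤ i ≤ l. (The overall factor [n]_q/[m+1]_q is the coefficient c_{0,0} of Ω_0.) -/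

import Mathlib

open scoped BigOperators

/-- The `q`-integer `[r]_q = (q^r - q^{-r})/(q - q⁻¹)`. -/
noncomputable def qint (q : ℂ) (r : ℤ) : ℂ := (q ^ r - q ^ (-r)) / (q - q⁻¹)

/-- The `q`-factorial `[r]_q! = ∏_{s=1}^r [s]_q`. -/
noncomputable def qfact (q : ℂ) (r : ℕ) : ℂ := ∏ s ∈ Finset.range r, qint q ((s : ℤ) + 1)

/-- The `q`-binomial coefficient `[r choose s]_q`. -/
noncomputable def qbinom (q : ℂ) (r s : ℕ) : ℂ := qfact q r / (qfact q s * qfact q (r - s))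

/-- `q` is not a root of unity. -/
def NotRootOfUnity (q : ℂ) : Prop := ∀ k : ℕ, 0 < k → q ^ k ≠ 1

/-- The underlying space of `V_m ⊗ V_n` in terms of the coefficients with respect to the
basis `v_i ⊗ w_j`, `0 ≤ i ≤ m`, `0 ≤ j ≤ n`. -/
abbrev W (m n : ℕ) := Fin (m + 1) → Fin (n + 1) → ℂ

/-- Extension of a coefficient array to all of `ℕ × ℕ`, zero out of range. -/
noncomputable def uext {m n : ℕ} (u : W m n) (a b : ℕ) : ℂ :=
  if h : a ≤ m ∧ b ≤ n then u ⟨a, by omega⟩ ⟨b, by omega⟩ else 0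

/-- The basis vector `v_i ⊗ w_j` of `V_m ⊗ V_n`. -/
def basisW (m n i j : ℕ) : W m n := fun a b => if (a : ℕ) = i ∧ (b : ℕ) = j then 1 else 0

/-- Action of `e` on `V_m ⊗ V_n`: `e (v ⊗ w) = e v ⊗ K w + v ⊗ e w`, where on `V_m`
`e v_i = [m+1-i]_q v_{i-1}` and `K v_i = q^{m-2i} v_i`. -/
noncomputable def eT (q : ℂ) (m n : ℕ) (u : W m n) : W m n := fun a b =>
  qint q ((m : ℤ) - ((a : ℕ) : ℤ)) * q ^ ((n : ℤ) - 2 * ((b : ℕ) : ℤ)) *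
      uext u ((a : ℕ) + 1) (b : ℕ)
    + qint q ((n : ℤ) - ((b : ℕ) : ℤ)) * uext u (a : ℕ) ((b : ℕ) + 1)

/-- Action of `f` on `V_m ⊗ V_n`: `f (v ⊗ w) = f v ⊗ w + K⁻¹ v ⊗ f w`, where on `V_m`
`f v_i = [i+1]_q v_{i+1}` and `K⁻¹ v_i = q^{-(m-2i)} v_i`. -/
noncomputable def fT (q : ℂ) (m n : ℕ) (u : W m n) : W m n := fun a b =>
  qint q ((a : ℕ) : ℤ) * uext u ((a : ℕ) - 1) (b : ℕ)
    + q ^ (-((m : ℤ) - 2 * ((a : ℕ) : ℤ))) * qint q ((b : ℕ) : ℤ) *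
        uext u (a : ℕ) ((b : ℕ) - 1)

/-- Action of `K` on `V_m ⊗ V_n`: `K (v ⊗ w) = K v ⊗ K w`. -/
noncomputable def KT (q : ℂ) (m n : ℕ) (u : W m n) : W m n := fun a b =>
  q ^ ((m : ℤ) - 2 * ((a : ℕ) : ℤ)) * q ^ ((n : ℤ) - 2 * ((b : ℕ) : ℤ)) * u a b

/-- Action of `e₀` on the evaluation module `V_m(x) ⊗ V_n(y)`:
`e₀ (v ⊗ w) = q⁻¹ x (f v) ⊗ (K⁻¹ w) + q⁻¹ y v ⊗ (f w)`. -/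
noncomputable def e0T (q x y : ℂ) (m n : ℕ) (u : W m n) : W m n := fun a b =>
  q⁻¹ * x * qint q ((a : ℕ) : ℤ) * q ^ (-((n : ℤ) - 2 * ((b : ℕ) : ℤ))) *
      uext u ((a : ℕ) - 1) (b : ℕ)
    + q⁻¹ * y * qint q ((b : ℕ) : ℤ) * uext u (a : ℕ) ((b : ℕ) - 1)

/-- Action of `f₀` on the evaluation module `V_m(x) ⊗ V_n(y)`:
`f₀ (v ⊗ w) = q x⁻¹ (e v) ⊗ w + q y⁻¹ (K v) ⊗ (e w)`. -/
noncomputable def f0T (q x y : ℂ) (m n : ℕ) (u : W m n) : W m n := fun a b =>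
  q * x⁻¹ * qint q ((m : ℤ) - ((a : ℕ) : ℤ)) * uext u ((a : ℕ) + 1) (b : ℕ)
    + q * y⁻¹ * q ^ ((m : ℤ) - 2 * ((a : ℕ) : ℤ)) * qint q ((n : ℤ) - ((b : ℕ) : ℤ)) *
        uext u (a : ℕ) ((b : ℕ) + 1)

/-- The coefficient `c_{i,l-i} = (-1)^i q^{i(2l-n-i-1)} ∏_{j=0}^i [n-l+j]_q/[m-j+1]_q`. -/
noncomputable def cOmega (q : ℂ) (m n l i : ℕ) : ℂ :=
  (-1 : ℂ) ^ i * q ^ ((i : ℤ) * (2 * (l : ℤ) - (n : ℤ) - (i : ℤ) - 1)) *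
    ∏ j ∈ Finset.range (i + 1),
      qint q ((n : ℤ) - (l : ℤ) + (j : ℤ)) / qint q ((m : ℤ) - (j : ℤ) + 1)

/-- The highest weight vector `Ω_l = ∑_{i=0}^l c_{i,l-i} v_i ⊗ w_{l-i}`. -/
noncomputable def Omega (q : ℂ) (m n l : ℕ) : W m n :=
  ∑ i ∈ Finset.range (l + 1), cOmega q m n l i • basisW m n i (l - i)

/-- The coefficient `d_{i,l} = (-1)^i q^{i(-m+2l-i-1)} ∏_{j=0}^i [m-l+j]_q/[n-j+1]_q`. -/
noncomputable def dPhi (q : ℂ) (m n l i : ℕ) : ℂ :=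
  (-1 : ℂ) ^ i * q ^ ((i : ℤ) * (-(m : ℤ) + 2 * (l : ℤ) - (i : ℤ) - 1)) *
    ∏ j ∈ Finset.range (i + 1),
      qint q ((m : ℤ) - (l : ℤ) + (j : ℤ)) / qint q ((n : ℤ) - (j : ℤ) + 1)

/-- The lowest weight vector `Φ_l = ∑_{i=0}^l d_{i,l} v_{m-l+i} ⊗ w_{n-i}`. -/
noncomputable def Phi (q : ℂ) (m n l : ℕ) : W m n :=
  ∑ i ∈ Finset.range (l + 1), dPhi q m n l i • basisW m n (m - l + i) (n - i)

/-- `φ_{l,j} = e₀^{l-j} f^j Ω₀` in `V_m(x) ⊗ V_n(y)`. -/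
noncomputable def phiLJ (q x y : ℂ) (m n l j : ℕ) : W m n :=
  (e0T q x y m n)^[l - j] ((fT q m n)^[j] (Omega q m n 0))


lemma qint_addkey (q : ℂ) (hq : q ≠ 0) (a b : ℤ) :
    qint q a * q ^ b + qint q b * q ^ (-a) = qint q (a + b) := by
  unfold qint
  rw [div_mul_eq_mul_div, div_mul_eq_mul_div, ← add_div]
  congr 1
  rw [sub_mul, sub_mul, ← zpow_add₀ hq, ← zpow_add₀ hq, ← zpow_add₀ hq, ← zpow_add₀ hq]
  rw [show -a + b = b + -a by ring, show -b + -a = -(a+b) by ring, show a + b = b + a by ring]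
  ring

lemma qint_zero (q : ℂ) : qint q 0 = 0 := by simp [qint]

lemma qfact_succ (q : ℂ) (l : ℕ) : qfact q (l + 1) = qfact q l * qint q ((l : ℤ) + 1) :=
  Finset.prod_range_succ _ _

lemma main_aux (q x y : ℂ) (hq : q ≠ 0) (m n : ℕ) (hnm : n ≤ m) :
    ∀ l, l ≤ n → ∀ a b : ℕ, uext ((e0T q x y m n)^[l] (Omega q m n 0)) a b
      = if a + b = l then
          x ^ a * y ^ b * qfact q l * q ^ (-(l : ℤ)) *
            q ^ ((a : ℤ) * ((b : ℤ) - (n : ℤ))) * (qint q (n : ℤ) / qint q ((m : ℤ) + 1))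
        else 0 := by
  intro l
  induction l with
  | zero =>
    intro _ a b
    by_cases h : a ≤ m ∧ b ≤ n
    · by_cases h0 : a = 0 ∧ b = 0
      · obtain ⟨rfl, rfl⟩ := h0
        simp [uext, Omega, basisW, cOmega, qfact]
      · have hne : ¬(a + b = 0) := by omega
        simp [uext, Omega, basisW, cOmega, hne, h, h0]
    · have hne : ¬(a + b = 0) := by omega
      rw [uext, dif_neg h, if_neg hne]
  | succ l ih =>
    intro hl a b
    have ihs := ih (by omega)
    by_cases h : a ≤ m ∧ b ≤ n
    · rw [uext, dif_pos h, Function.iterate_succ_apply']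
      show q⁻¹ * x * qint q (a : ℤ) * q ^ (-((n : ℤ) - 2 * (b : ℤ))) *
            uext ((e0T q x y m n)^[l] (Omega q m n 0)) (a - 1) b
          + q⁻¹ * y * qint q (b : ℤ) *
            uext ((e0T q x y m n)^[l] (Omega q m n 0)) a (b - 1) = _
      rw [ihs (a-1) b, ihs a (b-1)]
      by_cases hab : a + b = l + 1
      · rw [if_pos hab, qfact_succ]
        have e3 : (q:ℂ) ^ (-((l:ℤ)+1)) = q ^ (-(l:ℤ)) * q⁻¹ := by
          rw [← zpow_neg_one q, ← zpow_add₀ hq]; congr 1; ring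
        rcases Nat.eq_zero_or_pos a with ha | ha
        · -- a = 0, b = l + 1
          subst ha
          have hb : b = l + 1 := by omega
          subst hb
          rw [if_neg (by omega), if_pos (by omega), mul_zero, zero_add]
          simp only [Nat.add_sub_cancel]
          push_cast
          rw [e3]
          simp only [zero_mul, zpow_zero, pow_zero]
          ring
        · rcases Nat.eq_zero_or_pos b with hb | hb
          · -- b = 0, a = l + 1
            subst hb
            have ha1 : a = l + 1 := by omega
            subst ha1
            rw [if_pos (by omega), if_neg (by omega)]
            simp only [Nat.cast_zero, qint_zero, mul_zero, add_zero, Nat.add_sub_cancel]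
            push_cast
            rw [e3]
            have p : (q:ℂ) ^ (-((n:ℤ) - 0)) * q ^ ((l:ℤ) * (0 - (n:ℤ)))
                = q ^ (((l:ℤ)+1) * (0 - (n:ℤ))) := by
              rw [← zpow_add₀ hq]; congr 1; ring
            linear_combination (q⁻¹ * x * qint q ((l:ℤ)+1) * x^l * y^0 * qfact q l *
              q ^ (-(l:ℤ)) * (qint q (n:ℤ) / qint q ((m:ℤ)+1))) * p
          · obtain ⟨a', rfl⟩ : ∃ a', a = a' + 1 := ⟨a - 1, by omega⟩
            obtain ⟨b', rfl⟩ : ∃ b', b = b' + 1 := ⟨b - 1, by omega⟩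
            rw [if_pos (by omega), if_pos (by omega)]
            simp only [Nat.add_sub_cancel]
            push_cast
            rw [e3]
            have p1 : (q:ℂ) ^ (-((n:ℤ) - 2*((b':ℤ)+1))) * q ^ ((a':ℤ) * (((b':ℤ)+1) - (n:ℤ)))
                = q ^ (((a':ℤ)+1) * (((b':ℤ)+1) - (n:ℤ))) * q ^ ((b':ℤ)+1) := by
              rw [← zpow_add₀ hq, ← zpow_add₀ hq]; congr 1; ring
            have p2 : (q:ℂ) ^ (((a':ℤ)+1) * ((b':ℤ) - (n:ℤ)))
                = q ^ (((a':ℤ)+1) * (((b':ℤ)+1) - (n:ℤ))) * q ^ (-((a':ℤ)+1)) := by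
              rw [← zpow_add₀ hq]; congr 1; ring
            have key : qint q ((a':ℤ)+1) * q ^ ((b':ℤ)+1)
                + qint q ((b':ℤ)+1) * q ^ (-((a':ℤ)+1)) = qint q ((l:ℤ)+1) := by
              rw [qint_addkey q hq]; congr 1; omega
            linear_combination
              (q⁻¹ * x * qint q ((a':ℤ)+1) * x^a' * y^(b'+1) * qfact q l * q^(-(l:ℤ)) *
                (qint q (n:ℤ) / qint q ((m:ℤ)+1))) * p1
              + (q⁻¹ * y * qint q ((b':ℤ)+1) * x^(a'+1) * y^b' * qfact q l * q^(-(l:ℤ)) *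
                (qint q (n:ℤ) / qint q ((m:ℤ)+1))) * p2
              + (q⁻¹ * x^(a'+1) * y^(b'+1) * qfact q l * q^(-(l:ℤ)) *
                (qint q (n:ℤ) / qint q ((m:ℤ)+1)) *
                q ^ (((a':ℤ)+1) * (((b':ℤ)+1) - (n:ℤ)))) * key
      · rw [if_neg hab]
        rcases Nat.eq_zero_or_pos a with ha | ha
        · subst ha
          rcases Nat.eq_zero_or_pos b with hb | hb
          · subst hb; simp [qint_zero]
          · have h2 : ¬(0 + (b - 1) = l) := by omega
            rw [if_neg h2]
            simp only [Nat.cast_zero, qint_zero]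
            ring
        · rw [if_neg (by omega : ¬(a - 1 + b = l))]
          rcases Nat.eq_zero_or_pos b with hb | hb
          · subst hb
            simp only [Nat.cast_zero, qint_zero]
            ring
          · rw [if_neg (by omega : ¬(a + (b - 1) = l))]; ring
    · rw [uext, dif_neg h, if_neg (by omega)]

/-- The coefficient of `v_{l-i} ⊗ w_i` in `φ_{l,0} = e₀^l Ω₀`:
`γ_{l,0}^{l-i,i} = x^{l-i} y^i [l]_q! q^{-l} q^{(l-i)(i-n)} ⋅ ([n]_q/[m+1]_q)`. -/
theorem gamma_l_zero (q : ℂ) (hq : q ≠ 0) (hq' : NotRootOfUnity q)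
    (x y : ℂ) (hx : x ≠ 0) (hy : y ≠ 0)
    (m n : ℕ) (hnm : n ≤ m) (l i : ℕ) (hl : l ≤ n) (hi : i ≤ l) :
    phiLJ q x y m n l 0 ⟨l - i, by omega⟩ ⟨i, by omega⟩
      = x ^ (l - i) * y ^ i * qfact q l * q ^ (-(l : ℤ)) *
          q ^ (((l : ℤ) - (i : ℤ)) * ((i : ℤ) - (n : ℤ))) *
          (qint q (n : ℤ) / qint q ((m : ℤ) + 1)) := by
  have h := main_aux q x y hq m n hnm l hl (l - i) i
  rw [uext, dif_pos ⟨by omega, by omega⟩, if_pos (by omega)] at h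
  simp only [Nat.cast_sub hi] at h
  simp only [phiLJ, Nat.sub_zero, Function.iterate_zero, id_eq]
  exact h
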